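/- Let n be a positive integer, G a real n×n matrix, b ∈ ℝⁿ, and λ ≥ 0. A point x₀ ∈ ℝⁿ is a global minimizer of the robust objective J(x) = sup{ ‖(G + E)x − (b + e)‖₂ : ‖E‖_F ≤ λ, ‖e‖₂ ≤ λ } if and only if x₀ is a global minimizer of the regularized objective R(x) = ‖Gx − b‖₂ + λ‖x‖₂. -/

import Mathlib

/-- Euclidean norm of a vector in ℝⁿ. -/
noncomputable def eNorm {n : ℕ} (v : Fin n → ℝ) : ℝ :=
  Real.sqrt (∑ i, v i ^ 2)

/-- Frobenius norm of a real matrix. -/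
noncomputable def fNorm {m n : ℕ} (M : Matrix (Fin m) (Fin n) ℝ) : ℝ :=
  Real.sqrt (∑ i, ∑ j, M i j ^ 2)

/-- The robust objective: worst-case residual over Frobenius-bounded matrix
perturbations and Euclidean-bounded vector perturbations. -/
noncomputable def robustObj {n : ℕ} (G : Matrix (Fin n) (Fin n) ℝ)
    (b : Fin n → ℝ) (lam : ℝ) (x : Fin n → ℝ) : ℝ :=
  sSup {r : ℝ | ∃ (E : Matrix (Fin n) (Fin n) ℝ) (e : Fin n → ℝ),
      fNorm E ≤ lam ∧ eNorm e ≤ lam ∧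
      r = eNorm ((G + E).mulVec x - (b + e))}

/-- The regularized objective ‖Gx − b‖₂ + λ‖x‖₂. -/
noncomputable def regObj {n : ℕ} (G : Matrix (Fin n) (Fin n) ℝ)
    (b : Fin n → ℝ) (lam : ℝ) (x : Fin n → ℝ) : ℝ :=
  eNorm (G.mulVec x - b) + lam * eNorm x


lemma eNorm_eq {n : ℕ} (v : Fin n → ℝ) : eNorm v = ‖(WithLp.equiv 2 (Fin n → ℝ)).symm v‖ := by
  rw [EuclideanSpace.norm_eq]; simp [eNorm, sq_abs]
lemma eNorm_nonneg {n : ℕ} (v : Fin n → ℝ) : 0 ≤ eNorm v := Real.sqrt_nonneg _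
lemma eNorm_sq {n : ℕ} (v : Fin n → ℝ) : eNorm v ^ 2 = ∑ i, v i ^ 2 := by
  rw [eNorm, Real.sq_sqrt (Finset.sum_nonneg fun i _ => sq_nonneg _)]
lemma eNorm_add_le {n : ℕ} (v w : Fin n → ℝ) : eNorm (v + w) ≤ eNorm v + eNorm w := by
  simp only [eNorm_eq]
  rw [show (WithLp.equiv 2 (Fin n → ℝ)).symm (v + w)
      = (WithLp.equiv 2 (Fin n → ℝ)).symm v + (WithLp.equiv 2 (Fin n → ℝ)).symm w from rfl]
  exact norm_add_le _ _
lemma eNorm_smul {n : ℕ} (c : ℝ) (v : Fin n → ℝ) : eNorm (c • v) = |c| * eNorm v := by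
  simp only [eNorm_eq]
  rw [show (WithLp.equiv 2 (Fin n → ℝ)).symm (c • v)
      = c • (WithLp.equiv 2 (Fin n → ℝ)).symm v from rfl]
  rw [norm_smul, Real.norm_eq_abs]
lemma eNorm_eq_zero {n : ℕ} {v : Fin n → ℝ} (h : eNorm v = 0) : v = 0 := by
  rw [eNorm_eq, norm_eq_zero] at h
  exact congrArg (WithLp.equiv 2 (Fin n → ℝ)) h
lemma eNorm_mulVec_le {n : ℕ} (E : Matrix (Fin n) (Fin n) ℝ) (x : Fin n → ℝ) :
    eNorm (E.mulVec x) ≤ fNorm E * eNorm x := by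
  rw [eNorm, fNorm, eNorm, ← Real.sqrt_mul (show (0:ℝ) ≤ ∑ i, ∑ j, E i j ^ 2 from Finset.sum_nonneg fun i _ =>
    Finset.sum_nonneg fun j _ => sq_nonneg _)]
  apply Real.sqrt_le_sqrt
  rw [Finset.sum_mul]
  apply Finset.sum_le_sum
  intro i _
  have : E.mulVec x i = ∑ j, E i j * x j := rfl
  rw [this]
  exact Finset.sum_mul_sq_le_sq_mul_sq _ _ _


lemma eNorm_single {n : ℕ} (i : Fin n) : eNorm (Pi.single i (1:ℝ)) = 1 := by
  rw [eNorm]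
  have : ∑ j, (Pi.single i (1:ℝ) : Fin n → ℝ) j ^ 2 = 1 := by
    rw [Finset.sum_eq_single i]
    · simp
    · intro j _ hj; simp [Pi.single_apply, hj]
    · simp
  rw [this, Real.sqrt_one]

lemma eNorm_zero {n : ℕ} : eNorm (0 : Fin n → ℝ) = 0 := by simp [eNorm]

lemma robust_eq {n : ℕ} (hn : 0 < n) (G : Matrix (Fin n) (Fin n) ℝ) (b : Fin n → ℝ)
    (lam : ℝ) (hlam : 0 ≤ lam) (x : Fin n → ℝ) :
    robustObj G b lam x = regObj G b lam x + lam := by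
  set r : Fin n → ℝ := G.mulVec x - b with hr
  -- unit direction u
  obtain ⟨u, hu1, hru⟩ : ∃ u : Fin n → ℝ, eNorm u = 1 ∧ r = eNorm r • u := by
    by_cases h : r = 0
    · refine ⟨(Pi.single ⟨0, hn⟩ 1 : Fin n → ℝ), eNorm_single _, ?_⟩
      rw [h, eNorm_zero, zero_smul]
    · have hpos : 0 < eNorm r :=
        lt_of_le_of_ne (eNorm_nonneg r) (fun hc => h (eNorm_eq_zero hc.symm))
      refine ⟨(eNorm r)⁻¹ • r, ?_, ?_⟩
      · rw [eNorm_smul, abs_of_pos (inv_pos.2 hpos), inv_mul_cancel₀ hpos.ne']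
      · rw [smul_smul, mul_inv_cancel₀ hpos.ne', one_smul]
  -- the perturbation matrix
  obtain ⟨E, hEF, hEx⟩ : ∃ E : Matrix (Fin n) (Fin n) ℝ,
      fNorm E ≤ lam ∧ E.mulVec x = (lam * eNorm x) • u := by
    by_cases hx : x = 0
    · refine ⟨0, ?_, ?_⟩
      · have : fNorm (0 : Matrix (Fin n) (Fin n) ℝ) = 0 := by simp [fNorm]
        rw [this]; exact hlam
      · rw [hx, eNorm_zero, mul_zero, zero_smul, Matrix.mulVec_zero]
    · have hxpos : 0 < eNorm x :=
        lt_of_le_of_ne (eNorm_nonneg x) (fun hc => hx (eNorm_eq_zero hc.symm))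
      set c : ℝ := lam / eNorm x with hc
      have hc0 : 0 ≤ c := div_nonneg hlam hxpos.le
      refine ⟨Matrix.of (fun i j => c * (u i * x j)), ?_, ?_⟩
      · rw [fNorm]
        have key : ∑ i, ∑ j, (Matrix.of (fun i j => c * (u i * x j)) i j) ^ 2
            = (c * eNorm x) ^ 2 := by
          simp only [Matrix.of_apply]
          have h1 : ∀ (i j : Fin n), (c * (u i * x j)) ^ 2 = c ^ 2 * u i ^ 2 * x j ^ 2 := by
            intro i j; ring
          simp_rw [h1, ← Finset.mul_sum, ← Finset.sum_mul, ← Finset.mul_sum,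
            ← eNorm_sq, hu1]
          ring
        rw [key, Real.sqrt_sq (by positivity), hc, div_mul_cancel₀ _ hxpos.ne']
      · funext i
        have hent : (Matrix.of (fun i j => c * (u i * x j))).mulVec x i
            = c * u i * ∑ j, x j ^ 2 := by
          show (∑ j, c * (u i * x j) * x j) = _
          rw [Finset.mul_sum]
          congr 1; funext j; ring
        rw [hent, ← eNorm_sq, hc]
        show lam / eNorm x * u i * eNorm x ^ 2 = ((lam * eNorm x) • u) i
        show lam / eNorm x * u i * eNorm x ^ 2 = (lam * eNorm x) * u i
        field_simp
  set e : Fin n → ℝ := (-lam) • u with he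
  have hee : eNorm e = lam := by
    rw [he, eNorm_smul, hu1, abs_neg, abs_of_nonneg hlam, mul_one]
  -- the attained value
  have hattain : eNorm ((G + E).mulVec x - (b + e)) = regObj G b lam x + lam := by
    have hvec : (G + E).mulVec x - (b + e)
        = (eNorm r + lam * eNorm x + lam) • u := by
      rw [Matrix.add_mulVec]
      have hab : G.mulVec x + E.mulVec x - (b + e) = (G.mulVec x - b) + E.mulVec x - e := by
        abel
      rw [hab, ← hr, hEx, he]
      conv_lhs => rw [hru]
      module
    rw [hvec, eNorm_smul, hu1, mul_one,
      abs_of_nonneg (add_nonneg (add_nonneg (eNorm_nonneg r)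
        (mul_nonneg hlam (eNorm_nonneg x))) hlam), regObj, ← hr]
  -- upper bound
  have hub : ∀ y ∈ {t : ℝ | ∃ (E' : Matrix (Fin n) (Fin n) ℝ) (e' : Fin n → ℝ),
      fNorm E' ≤ lam ∧ eNorm e' ≤ lam ∧
      t = eNorm ((G + E').mulVec x - (b + e'))}, y ≤ regObj G b lam x + lam := by
    rintro y ⟨E', e', hE', he', rfl⟩
    have hvec : (G + E').mulVec x - (b + e')
        = (G.mulVec x - b) + (E'.mulVec x + (-1 : ℝ) • e') := by
      rw [Matrix.add_mulVec]; module
    rw [hvec]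
    calc eNorm ((G.mulVec x - b) + (E'.mulVec x + (-1 : ℝ) • e'))
        ≤ eNorm (G.mulVec x - b) + eNorm (E'.mulVec x + (-1 : ℝ) • e') :=
          eNorm_add_le _ _
      _ ≤ eNorm (G.mulVec x - b) + (eNorm (E'.mulVec x) + eNorm ((-1 : ℝ) • e')) := by
          gcongr; exact eNorm_add_le _ _
      _ ≤ eNorm (G.mulVec x - b) + (fNorm E' * eNorm x + eNorm e') := by
          gcongr
          · exact eNorm_mulVec_le _ _
          · rw [eNorm_smul]; simp
      _ ≤ eNorm (G.mulVec x - b) + (lam * eNorm x + lam) := by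
          gcongr
          exact eNorm_nonneg x
      _ = regObj G b lam x + lam := by rw [regObj]; ring
  -- conclude
  have hmem : regObj G b lam x + lam ∈ {t : ℝ | ∃ (E' : Matrix (Fin n) (Fin n) ℝ)
      (e' : Fin n → ℝ), fNorm E' ≤ lam ∧ eNorm e' ≤ lam ∧
      t = eNorm ((G + E').mulVec x - (b + e'))} :=
    ⟨E, e, hEF, hee.le, hattain.symm⟩
  exact IsGreatest.csSup_eq ⟨hmem, hub⟩


/-- A point is a global minimizer of the robust objective iff it is a global
minimizer of the regularized objective. -/
theorem robust_minimizer_iff_regularized_minimizer (n : ℕ) (hn : 0 < n)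
    (G : Matrix (Fin n) (Fin n) ℝ) (b : Fin n → ℝ) (lam : ℝ) (hlam : 0 ≤ lam)
    (x₀ : Fin n → ℝ) :
    (∀ x : Fin n → ℝ, robustObj G b lam x₀ ≤ robustObj G b lam x) ↔
    (∀ x : Fin n → ℝ, regObj G b lam x₀ ≤ regObj G b lam x) := by
  simp only [robust_eq hn G b lam hlam]
  constructor <;> (intro h x; have := h x; linarith)
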